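/- Let Ω ⊆ ℝ^d be measurable with Lebesgue measure. Let ψ : Ω → ℂ be differentiable with gradient ∇ψ, and let A : Ω → ℝ^d be measurable. Assume ∇ψ ∈ L²(Ω; ℂ^d), ψ ∈ L²(Ω) ∩ L⁶(Ω), ‖A‖_{L⁶} < ∞, and let S ≥ 0 satisfy the Sobolev-type bound ‖ψ‖_{L⁶} ≤ S·‖∇ψ‖_{L²}. Then ‖∇ψ‖_{L²} ≤ 2·‖ i∇ψ + ψA ‖_{L²} + S·‖A‖²_{L⁶}·‖ψ‖_{L²}. -/

import Mathlib

open Complex MeasureTheory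
open scoped ENNReal

noncomputable section

private lemma memLp_of_int {α E : Type*} [MeasurableSpace α] [NormedAddCommGroup E]
    {μ : Measure α} {f : α → E} (hm : AEStronglyMeasurable f μ) {p : ℝ} (hp : 0 < p)
    (h : Integrable (fun x => ‖f x‖ ^ p) μ) : MemLp f (ENNReal.ofReal p) μ := by
  have h1 : ENNReal.ofReal p ≠ 0 := by simp [ENNReal.ofReal_eq_zero, not_le, hp]
  have h2 : ENNReal.ofReal p ≠ ⊤ := ENNReal.ofReal_ne_top
  have h3 := memLp_norm_rpow_iff (p := ENNReal.ofReal p) hm h1 h2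
  rw [ENNReal.toReal_ofReal hp.le, ENNReal.div_self h1 h2, memLp_one_iff_integrable] at h3
  exact h3.1 h

private lemma gradcomp_aemeas (d : ℕ) (i0 : Fin d) (Ω : Set (EuclideanSpace ℝ (Fin d)))
    (hΩ : MeasurableSet Ω)
    (ψ : EuclideanSpace ℝ (Fin d) → ℂ) (hψd : DifferentiableOn ℝ ψ Ω)
    (L : ℂ →L[ℝ] ℝ) (j : Fin d) :
    AEMeasurable (fun x => L (fderivWithin ℝ ψ Ω x (EuclideanSpace.single j 1)))
      (volume.restrict Ω) := by
  have key : AEMeasurable (fun x =>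
      (((ContinuousLinearMap.id ℝ ℝ).smulRight (EuclideanSpace.single i0 (1:ℝ))).comp
        L).comp (fderivWithin ℝ ψ Ω x)) (volume.restrict Ω) := by
    apply aemeasurable_fderivWithin (f := fun x =>
      (((ContinuousLinearMap.id ℝ ℝ).smulRight
        (EuclideanSpace.single i0 (1:ℝ))).comp L) (ψ x)) volume hΩ
    intro x hx
    exact ContinuousLinearMap.hasFDerivAt _ |>.comp_hasFDerivWithinAt x
      ((hψd x hx).hasFDerivWithinAt)
  have cont : Continuous fun (g : EuclideanSpace ℝ (Fin d) →L[ℝ] EuclideanSpace ℝ (Fin d)) =>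
      (EuclideanSpace.proj i0) (g (EuclideanSpace.single j (1:ℝ))) :=
    (EuclideanSpace.proj _).continuous.comp
      ((ContinuousLinearMap.apply ℝ _ (EuclideanSpace.single j (1:ℝ))).continuous)
  have h2 := cont.measurable.comp_aemeasurable key
  convert h2 using 2 with x
  simp [EuclideanSpace.single_apply]

private lemma aemeasurable_pi' {α ι β : Type*} [MeasurableSpace α] [MeasurableSpace β]
    [Countable ι] {μ : MeasureTheory.Measure α} {f : α → ι → β}
    (hf : ∀ i, AEMeasurable (fun x => f x i) μ) : AEMeasurable f μ := by
  refine ⟨fun x i => (hf i).mk _ x, measurable_pi_lambda _ fun i => (hf i).measurable_mk, ?_⟩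
  filter_upwards [ae_all_iff.2 fun i => (hf i).ae_eq_mk] with x hx
  funext i
  exact hx i

private lemma pow_rpow_nat {t : ℝ} (ht : 0 ≤ t) (m n : ℕ) (r : ℝ) (h : (m:ℝ) * r = n) :
    (t ^ m) ^ r = t ^ n := by
  rw [← Real.rpow_natCast t m, ← Real.rpow_mul ht, h, Real.rpow_natCast]

private lemma rpow_rpow_nat {t : ℝ} (ht : 0 ≤ t) (a b : ℝ) (m : ℕ) (h : a * b = m) :
    (t ^ a) ^ b = t ^ m := by
  rw [← Real.rpow_mul ht, h, Real.rpow_natCast]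

private lemma rpow_mul_self_nat {t : ℝ} (ht : 0 ≤ t) {a : ℝ} (ha : 0 < a) (m : ℕ)
    (h : a + a = m) : t ^ a * t ^ a = t ^ m := by
  rcases ht.eq_or_lt with h0 | h0
  · have hm : m ≠ 0 := by
      rintro rfl
      norm_num at h
      linarith
    rw [← h0, Real.zero_rpow ha.ne', zero_pow hm, mul_zero]
  · rw [← Real.rpow_add h0, h, Real.rpow_natCast]

private lemma amgm_sqrt {a b : ℝ} (ha : 0 ≤ a) (hb : 0 ≤ b) :
    Real.sqrt (a * b) ≤ (a + b) / 2 := by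
  rw [Real.sqrt_mul ha]
  nlinarith [sq_nonneg (Real.sqrt a - Real.sqrt b), Real.sq_sqrt ha, Real.sq_sqrt hb,
    Real.sqrt_nonneg a, Real.sqrt_nonneg b]

/-- The `j`-th component of the gradient of `f` on `Ω` (from the Fréchet derivative). -/
def gradW {d : ℕ} (Ω : Set (EuclideanSpace ℝ (Fin d)))
    (f : EuclideanSpace ℝ (Fin d) → ℂ) (x : EuclideanSpace ℝ (Fin d)) (j : Fin d) : ℂ :=
  fderivWithin ℝ f Ω x (EuclideanSpace.single j 1)

theorem stmt13 (d : ℕ) (Ω : Set (EuclideanSpace ℝ (Fin d))) (hΩ : MeasurableSet Ω)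
    (ψ : EuclideanSpace ℝ (Fin d) → ℂ) (A : EuclideanSpace ℝ (Fin d) → Fin d → ℝ)
    (hψd : DifferentiableOn ℝ ψ Ω) (hA : Measurable A)
    (hGψ : Integrable (fun x => ∑ j, Complex.normSq (gradW Ω ψ x j)) (volume.restrict Ω))
    (hψ2 : Integrable (fun x => Complex.normSq (ψ x)) (volume.restrict Ω))
    (hψ6 : Integrable (fun x => ‖ψ x‖ ^ (6 : ℕ)) (volume.restrict Ω))
    (hA6 : Integrable (fun x => Real.sqrt (∑ j, (A x j) ^ 2) ^ (6 : ℕ)) (volume.restrict Ω))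
    (S : ℝ) (hS : 0 ≤ S)
    (hSob : (∫ x in Ω, ‖ψ x‖ ^ (6 : ℕ)) ^ ((1 : ℝ) / 6)
      ≤ S * (∫ x in Ω, ∑ j, Complex.normSq (gradW Ω ψ x j)) ^ ((1 : ℝ) / 2)) :
    (∫ x in Ω, ∑ j, Complex.normSq (gradW Ω ψ x j)) ^ ((1 : ℝ) / 2)
      ≤ 2 * (∫ x in Ω, ∑ j, Complex.normSq
            (Complex.I * gradW Ω ψ x j + ψ x * (A x j : ℂ))) ^ ((1 : ℝ) / 2)
        + S * ((∫ x in Ω, Real.sqrt (∑ j, (A x j) ^ 2) ^ (6 : ℕ)) ^ ((1 : ℝ) / 6)) ^ (2 : ℕ)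
          * (∫ x in Ω, Complex.normSq (ψ x)) ^ ((1 : ℝ) / 2) := by
  rcases Nat.eq_zero_or_pos d with hd0 | hd
  · subst hd0
    simp only [Finset.univ_eq_empty, Finset.sum_empty, Real.sqrt_zero,
      zero_pow (by norm_num : (6:ℕ) ≠ 0), integral_zero,
      Real.zero_rpow (by norm_num : (1:ℝ)/2 ≠ 0), Real.zero_rpow (by norm_num : (1:ℝ)/6 ≠ 0)]
    have h0 : (0:ℝ) ≤ (∫ x in Ω, Complex.normSq (ψ x)) ^ ((1:ℝ)/2) :=
      Real.rpow_nonneg (integral_nonneg fun x => Complex.normSq_nonneg _) _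
    nlinarith
  -- main case
  set μ := volume.restrict Ω with hμ
  have hgm : ∀ j, AEMeasurable (fun x => gradW Ω ψ x j) μ := by
    intro j
    have hre := gradcomp_aemeas d ⟨0, hd⟩ Ω hΩ ψ hψd Complex.reCLM j
    have him := gradcomp_aemeas d ⟨0, hd⟩ Ω hΩ ψ hψd Complex.imCLM j
    have hsum := (Complex.measurable_ofReal.comp_aemeasurable hre).add
      ((Complex.measurable_ofReal.comp_aemeasurable him).mul_const Complex.I)
    refine hsum.congr (ae_of_all _ fun x => ?_)
    simp [gradW, Complex.re_add_im]
  have hψm : AEStronglyMeasurable ψ μ := hψd.continuousOn.aestronglyMeasurable hΩ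
  have habs : AEMeasurable (fun x => ‖ψ x‖) μ := hψm.norm.aemeasurable
  set Gv : EuclideanSpace ℝ (Fin d) → EuclideanSpace ℂ (Fin d) :=
    fun x => (EuclideanSpace.equiv (Fin d) ℂ).symm (fun j => gradW Ω ψ x j) with hGv
  set Av : EuclideanSpace ℝ (Fin d) → EuclideanSpace ℂ (Fin d) :=
    fun x => (EuclideanSpace.equiv (Fin d) ℂ).symm (fun j => ((A x j : ℝ) : ℂ)) with hAvdef
  set Wv : EuclideanSpace ℝ (Fin d) → EuclideanSpace ℂ (Fin d) :=
    fun x => ψ x • Av x with hWv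
  set Cv : EuclideanSpace ℝ (Fin d) → EuclideanSpace ℂ (Fin d) :=
    fun x => Complex.I • Gv x + Wv x with hCv
  have hAvm : AEStronglyMeasurable Av μ :=
    ((EuclideanSpace.equiv (Fin d) ℂ).symm.continuous).comp_aestronglyMeasurable
      ((measurable_pi_lambda _ fun j => Complex.measurable_ofReal.comp
        ((measurable_pi_apply j).comp hA)).aestronglyMeasurable)
  have hGvm : AEStronglyMeasurable Gv μ :=
    ((EuclideanSpace.equiv (Fin d) ℂ).symm.continuous).comp_aestronglyMeasurable
      ((aemeasurable_pi' fun j => hgm j).aestronglyMeasurable)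
  have hWvm : AEStronglyMeasurable Wv μ := hψm.smul hAvm
  have hCvm : AEStronglyMeasurable Cv μ := (hGvm.const_smul Complex.I).add hWvm
  have hnorm : ∀ v : EuclideanSpace ℂ (Fin d), ‖v‖ ^ (2:ℕ) = ∑ j, Complex.normSq (v j) := by
    intro v
    rw [EuclideanSpace.norm_eq, Real.sq_sqrt (by positivity)]
    simp [Complex.sq_norm]
  have hAvn : ∀ x, ‖Av x‖ = Real.sqrt (∑ j, A x j ^ 2) := by
    intro x
    rw [EuclideanSpace.norm_eq]
    congr 1
    refine Finset.sum_congr rfl fun j _ => ?_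
    show ‖((A x j : ℝ) : ℂ)‖ ^ 2 = A x j ^ 2
    simp [Complex.norm_real, _root_.sq_abs]
  -- MemLp facts
  have hG2 : MemLp Gv 2 μ :=
    (memLp_two_iff_integrable_sq_norm hGvm).2
      (hGψ.congr (ae_of_all _ fun x => (hnorm (Gv x)).symm))
  have hI3 : Integrable (fun x => ‖ψ x‖ ^ (3:ℕ)) μ := by
    refine Integrable.mono' (hψ2.add hψ6) ((habs.pow_const 3).aestronglyMeasurable)
      (ae_of_all _ fun x => ?_)
    have h0 : (0:ℝ) ≤ ‖ψ x‖ := norm_nonneg _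
    rw [Real.norm_eq_abs, _root_.abs_of_nonneg (by positivity)]
    simp only [Pi.add_apply, Complex.normSq_eq_norm_sq]
    nlinarith [sq_nonneg (‖ψ x‖ ^ 2 - ‖ψ x‖),
      sq_nonneg (‖ψ x‖ ^ 3 - ‖ψ x‖), h0]
  have hψ3 : MemLp ψ (ENNReal.ofReal 3) μ := by
    refine memLp_of_int hψm (by norm_num) (hI3.congr (ae_of_all _ fun x => ?_))
    show ‖ψ x‖ ^ (3:ℕ) = ‖ψ x‖ ^ (3:ℝ)
    rw [show ((3:ℝ)) = ((3:ℕ):ℝ) by norm_num, Real.rpow_natCast]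
  have hAv6 : MemLp Av (ENNReal.ofReal 6) μ := by
    refine memLp_of_int hAvm (by norm_num) (hA6.congr (ae_of_all _ fun x => ?_))
    show Real.sqrt (∑ j, A x j ^ 2) ^ (6:ℕ) = ‖Av x‖ ^ (6:ℝ)
    rw [hAvn x, show ((6:ℝ)) = ((6:ℕ):ℝ) by norm_num, Real.rpow_natCast]
  have hW2 : MemLp Wv 2 μ := by
    have h36 : (1:ℝ≥0∞)/2 = 1/(ENNReal.ofReal 3) + 1/(ENNReal.ofReal 6) := by
      rw [show (1:ℝ≥0∞)/2 = ENNReal.ofReal (1/2) by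
            rw [ENNReal.ofReal_div_of_pos (by norm_num), ENNReal.ofReal_one,
              ENNReal.ofReal_ofNat],
          show (1:ℝ≥0∞)/(ENNReal.ofReal 3) = ENNReal.ofReal (1/3) by
            rw [ENNReal.ofReal_div_of_pos (by norm_num), ENNReal.ofReal_one],
          show (1:ℝ≥0∞)/(ENNReal.ofReal 6) = ENNReal.ofReal (1/6) by
            rw [ENNReal.ofReal_div_of_pos (by norm_num), ENNReal.ofReal_one],
          ← ENNReal.ofReal_add (by norm_num) (by norm_num)]
      norm_num
    haveI : ENNReal.HolderTriple (ENNReal.ofReal 3) (ENNReal.ofReal 6) 2 :=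
      ⟨by simpa only [one_div] using h36.symm⟩
    exact hAv6.smul hψ3
  have hC2 : MemLp Cv 2 μ := (hG2.const_smul Complex.I).add hW2
  -- Minkowski
  have hGdecomp : Gv = (-Complex.I) • Cv + Complex.I • Wv := by
    funext x
    show Gv x = (-Complex.I) • (Complex.I • Gv x + Wv x) + Complex.I • Wv x
    rw [smul_add, smul_smul, neg_mul, Complex.I_mul_I, neg_neg, one_smul, add_assoc,
      ← add_smul, neg_add_cancel, zero_smul, add_zero]
  have mink : eLpNorm Gv 2 μ ≤ eLpNorm Cv 2 μ + eLpNorm Wv 2 μ := by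
    calc eLpNorm Gv 2 μ
        = eLpNorm ((-Complex.I) • Cv + Complex.I • Wv) 2 μ := by rw [← hGdecomp]
      _ ≤ eLpNorm ((-Complex.I) • Cv) 2 μ + eLpNorm (Complex.I • Wv) 2 μ :=
          eLpNorm_add_le (hCvm.const_smul _) (hWvm.const_smul _) one_le_two
      _ = eLpNorm Cv 2 μ + eLpNorm Wv 2 μ := by
          rw [eLpNorm_const_smul, eLpNorm_const_smul]
          simp [← ofReal_norm_eq_enorm]
  have e2 : (2:ℝ≥0∞) ≠ 0 := by norm_num
  have eT : (2:ℝ≥0∞) ≠ ⊤ := by norm_num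
  have hpos : ∀ f : EuclideanSpace ℝ (Fin d) → EuclideanSpace ℂ (Fin d),
      (0:ℝ) ≤ (∫ x, ‖f x‖ ^ (2:ℝ≥0∞).toReal ∂μ) ^ ((2:ℝ≥0∞).toReal⁻¹) := fun f =>
    Real.rpow_nonneg (integral_nonneg fun x => Real.rpow_nonneg (norm_nonneg _) _) _
  rw [hG2.eLpNorm_eq_integral_rpow_norm e2 eT, hC2.eLpNorm_eq_integral_rpow_norm e2 eT,
      hW2.eLpNorm_eq_integral_rpow_norm e2 eT,
      ← ENNReal.ofReal_add (hpos Cv) (hpos Wv)] at mink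
  have mink' := (ENNReal.ofReal_le_ofReal_iff (add_nonneg (hpos Cv) (hpos Wv))).1 mink
  simp only [ENNReal.toReal_ofNat] at mink'
  -- convert integrands
  have hGint : (∫ x, ‖Gv x‖ ^ (2:ℝ) ∂μ) = ∫ x, (∑ j, Complex.normSq (gradW Ω ψ x j)) ∂μ := by
    refine integral_congr_ae (ae_of_all _ fun x => ?_)
    show ‖Gv x‖ ^ (2:ℝ) = ∑ j, Complex.normSq (gradW Ω ψ x j)
    rw [show ((2:ℝ)) = ((2:ℕ):ℝ) by norm_num, Real.rpow_natCast]
    exact hnorm (Gv x)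
  have hCint : (∫ x, ‖Cv x‖ ^ (2:ℝ) ∂μ)
      = ∫ x, (∑ j, Complex.normSq (Complex.I * gradW Ω ψ x j + ψ x * (A x j : ℂ))) ∂μ := by
    refine integral_congr_ae (ae_of_all _ fun x => ?_)
    show ‖Cv x‖ ^ (2:ℝ) = ∑ j, Complex.normSq (Complex.I * gradW Ω ψ x j + ψ x * (A x j : ℂ))
    rw [show ((2:ℝ)) = ((2:ℕ):ℝ) by norm_num, Real.rpow_natCast]
    exact hnorm (Cv x)
  have hWint : (∫ x, ‖Wv x‖ ^ (2:ℝ) ∂μ)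
      = ∫ x, Complex.normSq (ψ x) * (∑ j, A x j ^ 2) ∂μ := by
    refine integral_congr_ae (ae_of_all _ fun x => ?_)
    show ‖Wv x‖ ^ (2:ℝ) = Complex.normSq (ψ x) * (∑ j, A x j ^ 2)
    rw [show ((2:ℝ)) = ((2:ℕ):ℝ) by norm_num, Real.rpow_natCast]
    rw [show Wv x = ψ x • Av x from rfl, norm_smul, mul_pow, hAvn x,
      Real.sq_sqrt (by positivity), Complex.sq_norm]
  rw [hGint, hCint, hWint] at mink'
  rw [show ((2:ℝ)⁻¹) = (1:ℝ)/2 from (one_div (2:ℝ)).symm] at mink'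
  -- Hölder 1
  have hconj1 : Real.HolderConjugate (3/2) 3 := ⟨by norm_num, by norm_num, by norm_num⟩
  have hfmem : MemLp (fun x => ‖ψ x‖ ^ (2:ℕ)) (ENNReal.ofReal (3/2)) μ := by
    refine memLp_of_int ((habs.pow_const 2).aestronglyMeasurable) (by norm_num)
      (hI3.congr (ae_of_all _ fun x => ?_))
    show ‖ψ x‖ ^ (3:ℕ) = ‖‖ψ x‖ ^ (2:ℕ)‖ ^ ((3:ℝ)/2)
    rw [Real.norm_of_nonneg (by positivity),
      pow_rpow_nat (norm_nonneg _) 2 3 (3/2) (by norm_num)]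
  have hsum_meas : Measurable (fun x => ∑ j, A x j ^ 2) :=
    Finset.measurable_sum _ fun j _ => ((measurable_pi_apply j).comp hA).pow_const 2
  have hgmem : MemLp (fun x => ∑ j, A x j ^ 2) (ENNReal.ofReal 3) μ := by
    refine memLp_of_int hsum_meas.aestronglyMeasurable (by norm_num)
      (hA6.congr (ae_of_all _ fun x => ?_))
    show Real.sqrt (∑ j, A x j ^ 2) ^ (6:ℕ) = ‖∑ j, A x j ^ 2‖ ^ (3:ℝ)
    rw [Real.norm_of_nonneg (by positivity), show ((3:ℝ)) = ((3:ℕ):ℝ) by norm_num,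
      Real.rpow_natCast, show (6:ℕ) = 2*3 by norm_num, pow_mul,
      Real.sq_sqrt (by positivity)]
  have hH1 := integral_mul_le_Lp_mul_Lq_of_nonneg hconj1
    (ae_of_all _ fun x => by show (0:ℝ) ≤ ‖ψ x‖ ^ (2:ℕ); positivity)
    (ae_of_all _ fun x => by show (0:ℝ) ≤ ∑ j, A x j ^ 2; positivity) hfmem hgmem
  beta_reduce at hH1
  have e1 : (∫ x, ‖ψ x‖ ^ (2:ℕ) * (∑ j, A x j ^ 2) ∂μ)
      = ∫ x, Complex.normSq (ψ x) * (∑ j, A x j ^ 2) ∂μ :=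
    integral_congr_ae (ae_of_all _ fun x => by
      show ‖ψ x‖ ^ (2:ℕ) * _ = Complex.normSq (ψ x) * _
      rw [Complex.sq_norm])
  have e2 : (∫ x, (‖ψ x‖ ^ (2:ℕ)) ^ ((3:ℝ)/2) ∂μ)
      = ∫ x, ‖ψ x‖ ^ (3:ℕ) ∂μ :=
    integral_congr_ae (ae_of_all _ fun x => by
      show (‖ψ x‖ ^ (2:ℕ)) ^ ((3:ℝ)/2) = ‖ψ x‖ ^ (3:ℕ)
      rw [pow_rpow_nat (norm_nonneg _) 2 3 (3/2) (by norm_num)])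
  have e3 : (∫ x, (∑ j, A x j ^ 2) ^ (3:ℝ) ∂μ)
      = ∫ x, Real.sqrt (∑ j, A x j ^ 2) ^ (6:ℕ) ∂μ :=
    integral_congr_ae (ae_of_all _ fun x => by
      show (∑ j, A x j ^ 2) ^ (3:ℝ) = Real.sqrt (∑ j, A x j ^ 2) ^ (6:ℕ)
      rw [show ((3:ℝ)) = ((3:ℕ):ℝ) by norm_num, Real.rpow_natCast,
        show (6:ℕ) = 2*3 by norm_num, pow_mul, Real.sq_sqrt (by positivity)])
  rw [e1, e2, e3, show (1:ℝ)/(3/2) = 2/3 by norm_num] at hH1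
  -- Hölder 2
  have hconj2 : Real.HolderConjugate (4/3) 4 := ⟨by norm_num, by norm_num, by norm_num⟩
  have hhm : AEMeasurable (fun x => ‖ψ x‖ ^ ((3:ℝ)/2)) μ :=
    habs.pow aemeasurable_const
  have hmem1 : MemLp (fun x => ‖ψ x‖ ^ ((3:ℝ)/2)) (ENNReal.ofReal (4/3)) μ := by
    refine memLp_of_int hhm.aestronglyMeasurable (by norm_num)
      (hψ2.congr (ae_of_all _ fun x => ?_))
    show Complex.normSq (ψ x) = ‖‖ψ x‖ ^ ((3:ℝ)/2)‖ ^ ((4:ℝ)/3)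
    rw [Real.norm_of_nonneg (Real.rpow_nonneg (norm_nonneg _) _),
      rpow_rpow_nat (norm_nonneg _) ((3:ℝ)/2) ((4:ℝ)/3) 2 (by norm_num),
      Complex.sq_norm]
  have hmem2 : MemLp (fun x => ‖ψ x‖ ^ ((3:ℝ)/2)) (ENNReal.ofReal 4) μ := by
    refine memLp_of_int hhm.aestronglyMeasurable (by norm_num)
      (hψ6.congr (ae_of_all _ fun x => ?_))
    show ‖ψ x‖ ^ (6:ℕ) = ‖‖ψ x‖ ^ ((3:ℝ)/2)‖ ^ (4:ℝ)
    rw [Real.norm_of_nonneg (Real.rpow_nonneg (norm_nonneg _) _),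
      rpow_rpow_nat (norm_nonneg _) ((3:ℝ)/2) (4:ℝ) 6 (by norm_num)]
  have hH2 := integral_mul_le_Lp_mul_Lq_of_nonneg hconj2
    (ae_of_all _ fun x => Real.rpow_nonneg (norm_nonneg _) _)
    (ae_of_all _ fun x => Real.rpow_nonneg (norm_nonneg _) _) hmem1 hmem2
  beta_reduce at hH2
  have e4 : (∫ x, ‖ψ x‖ ^ ((3:ℝ)/2) * ‖ψ x‖ ^ ((3:ℝ)/2) ∂μ)
      = ∫ x, ‖ψ x‖ ^ (3:ℕ) ∂μ :=
    integral_congr_ae (ae_of_all _ fun x =>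
      rpow_mul_self_nat (norm_nonneg _) (by norm_num : (0:ℝ) < 3/2) 3 (by norm_num))
  have e5 : (∫ x, (‖ψ x‖ ^ ((3:ℝ)/2)) ^ ((4:ℝ)/3) ∂μ)
      = ∫ x, Complex.normSq (ψ x) ∂μ :=
    integral_congr_ae (ae_of_all _ fun x => by
      show (‖ψ x‖ ^ ((3:ℝ)/2)) ^ ((4:ℝ)/3) = Complex.normSq (ψ x)
      rw [rpow_rpow_nat (norm_nonneg _) ((3:ℝ)/2) ((4:ℝ)/3) 2 (by norm_num),
        Complex.sq_norm])
  have e6 : (∫ x, (‖ψ x‖ ^ ((3:ℝ)/2)) ^ (4:ℝ) ∂μ)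
      = ∫ x, ‖ψ x‖ ^ (6:ℕ) ∂μ :=
    integral_congr_ae (ae_of_all _ fun x => by
      show (‖ψ x‖ ^ ((3:ℝ)/2)) ^ (4:ℝ) = ‖ψ x‖ ^ (6:ℕ)
      rw [rpow_rpow_nat (norm_nonneg _) ((3:ℝ)/2) (4:ℝ) 6 (by norm_num)])
  rw [e4, e5, e6, show (1:ℝ)/(4/3) = 3/4 by norm_num] at hH2
  -- endgame
  have nIG : (0:ℝ) ≤ ∫ x, (∑ j, Complex.normSq (gradW Ω ψ x j)) ∂μ :=
    integral_nonneg fun x => Finset.sum_nonneg fun j _ => Complex.normSq_nonneg _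
  have nIC : (0:ℝ) ≤ ∫ x, (∑ j, Complex.normSq
      (Complex.I * gradW Ω ψ x j + ψ x * (A x j : ℂ))) ∂μ :=
    integral_nonneg fun x => Finset.sum_nonneg fun j _ => Complex.normSq_nonneg _
  have nIM : (0:ℝ) ≤ ∫ x, Complex.normSq (ψ x) * (∑ j, A x j ^ 2) ∂μ :=
    integral_nonneg fun x => mul_nonneg (Complex.normSq_nonneg _)
      (Finset.sum_nonneg fun j _ => sq_nonneg _)
  have nI2 : (0:ℝ) ≤ ∫ x, Complex.normSq (ψ x) ∂μ :=
    integral_nonneg fun x => Complex.normSq_nonneg _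
  have nI6 : (0:ℝ) ≤ ∫ x, ‖ψ x‖ ^ (6:ℕ) ∂μ :=
    integral_nonneg fun x => by positivity
  have nIA : (0:ℝ) ≤ ∫ x, Real.sqrt (∑ j, A x j ^ 2) ^ (6:ℕ) ∂μ :=
    integral_nonneg fun x => by positivity
  have nI3 : (0:ℝ) ≤ ∫ x, ‖ψ x‖ ^ (3:ℕ) ∂μ :=
    integral_nonneg fun x => by positivity
  have hH2' : (∫ x, ‖ψ x‖ ^ (3:ℕ) ∂μ) ^ ((2:ℝ)/3)
      ≤ (∫ x, Complex.normSq (ψ x) ∂μ) ^ ((1:ℝ)/2)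
        * (∫ x, ‖ψ x‖ ^ (6:ℕ) ∂μ) ^ ((1:ℝ)/6) := by
    have h1 := Real.rpow_le_rpow nI3 hH2 (by norm_num : (0:ℝ) ≤ 2/3)
    refine h1.trans_eq ?_
    rw [Real.mul_rpow (Real.rpow_nonneg nI2 _) (Real.rpow_nonneg nI6 _),
      ← Real.rpow_mul nI2, ← Real.rpow_mul nI6]
    norm_num
  have hIM_le : (∫ x, Complex.normSq (ψ x) * (∑ j, A x j ^ 2) ∂μ)
      ≤ (S * (∫ x, Real.sqrt (∑ j, A x j ^ 2) ^ (6:ℕ) ∂μ) ^ ((1:ℝ)/3)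
          * (∫ x, Complex.normSq (ψ x) ∂μ) ^ ((1:ℝ)/2))
        * (∫ x, (∑ j, Complex.normSq (gradW Ω ψ x j)) ∂μ) ^ ((1:ℝ)/2) := by
    calc (∫ x, Complex.normSq (ψ x) * (∑ j, A x j ^ 2) ∂μ)
        ≤ (∫ x, ‖ψ x‖ ^ (3:ℕ) ∂μ) ^ ((2:ℝ)/3)
          * (∫ x, Real.sqrt (∑ j, A x j ^ 2) ^ (6:ℕ) ∂μ) ^ ((1:ℝ)/3) := hH1
      _ ≤ ((∫ x, Complex.normSq (ψ x) ∂μ) ^ ((1:ℝ)/2)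
            * (∫ x, ‖ψ x‖ ^ (6:ℕ) ∂μ) ^ ((1:ℝ)/6))
          * (∫ x, Real.sqrt (∑ j, A x j ^ 2) ^ (6:ℕ) ∂μ) ^ ((1:ℝ)/3) :=
          mul_le_mul_of_nonneg_right hH2' (Real.rpow_nonneg nIA _)
      _ ≤ ((∫ x, Complex.normSq (ψ x) ∂μ) ^ ((1:ℝ)/2)
            * (S * (∫ x, (∑ j, Complex.normSq (gradW Ω ψ x j)) ∂μ) ^ ((1:ℝ)/2)))
          * (∫ x, Real.sqrt (∑ j, A x j ^ 2) ^ (6:ℕ) ∂μ) ^ ((1:ℝ)/3) :=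
          mul_le_mul_of_nonneg_right
            (mul_le_mul_of_nonneg_left hSob (Real.rpow_nonneg nI2 _))
            (Real.rpow_nonneg nIA _)
      _ = _ := by ring
  have hIA36 : ((∫ x, Real.sqrt (∑ j, A x j ^ 2) ^ (6:ℕ) ∂μ) ^ ((1:ℝ)/6)) ^ (2:ℕ)
      = (∫ x, Real.sqrt (∑ j, A x j ^ 2) ^ (6:ℕ) ∂μ) ^ ((1:ℝ)/3) := by
    rw [← Real.rpow_natCast ((∫ x, Real.sqrt (∑ j, A x j ^ 2) ^ (6:ℕ) ∂μ) ^ ((1:ℝ)/6)) 2,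
      ← Real.rpow_mul nIA]
    norm_num
  rw [hIA36]
  have hynn : (0:ℝ) ≤ S * (∫ x, Real.sqrt (∑ j, A x j ^ 2) ^ (6:ℕ) ∂μ) ^ ((1:ℝ)/3)
      * (∫ x, Complex.normSq (ψ x) ∂μ) ^ ((1:ℝ)/2) :=
    mul_nonneg (mul_nonneg hS (Real.rpow_nonneg nIA _)) (Real.rpow_nonneg nI2 _)
  have hIMhalf : (∫ x, Complex.normSq (ψ x) * (∑ j, A x j ^ 2) ∂μ) ^ ((1:ℝ)/2)
      ≤ (S * (∫ x, Real.sqrt (∑ j, A x j ^ 2) ^ (6:ℕ) ∂μ) ^ ((1:ℝ)/3)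
          * (∫ x, Complex.normSq (ψ x) ∂μ) ^ ((1:ℝ)/2)
        + (∫ x, (∑ j, Complex.normSq (gradW Ω ψ x j)) ∂μ) ^ ((1:ℝ)/2)) / 2 := by
    calc (∫ x, Complex.normSq (ψ x) * (∑ j, A x j ^ 2) ∂μ) ^ ((1:ℝ)/2)
        = Real.sqrt (∫ x, Complex.normSq (ψ x) * (∑ j, A x j ^ 2) ∂μ) :=
          (Real.sqrt_eq_rpow _).symm
      _ ≤ Real.sqrt ((S * (∫ x, Real.sqrt (∑ j, A x j ^ 2) ^ (6:ℕ) ∂μ) ^ ((1:ℝ)/3)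
            * (∫ x, Complex.normSq (ψ x) ∂μ) ^ ((1:ℝ)/2))
          * (∫ x, (∑ j, Complex.normSq (gradW Ω ψ x j)) ∂μ) ^ ((1:ℝ)/2)) :=
          Real.sqrt_le_sqrt hIM_le
      _ ≤ _ := amgm_sqrt hynn (Real.rpow_nonneg nIG _)
  linarith [mink', hIMhalf]

end
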